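/- If S is a full Dyck skeleton, then area(S) ≤ defc(S). -/

import Mathlib

/-- A finite integer sequence is an *affine Dyck sequence* if each entry is at
most the previous entry plus 1. -/
def AffineDyck (x : List ℤ) : Prop := List.Chain' (fun a b => b ≤ a + 1) x

/-- An *ordinary Dyck sequence* is a nonempty affine Dyck sequence starting at
`0` with all entries nonnegative. -/
def OrdDyck (x : List ℤ) : Prop :=
  x ≠ [] ∧ AffineDyck x ∧ x.getD 0 0 = 0 ∧ ∀ a ∈ x, 0 ≤ a

/-- An index `j` of `C` is *eligible* if there is exactly one index `i < j`
with `C i = C j − 1`, and either `j` is the final index or the next entry is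
at most `C j`. -/
def Eligible (C : List ℤ) (j : ℕ) : Prop :=
  j < C.length ∧
  ((Finset.range j).filter (fun i => C.getD i 0 = C.getD j 0 - 1)).card = 1 ∧
  (j + 1 = C.length ∨ C.getD (j + 1) 0 ≤ C.getD j 0)

/-- A *full Dyck skeleton*: an ordinary Dyck sequence with no eligible index. -/
def FullSkeleton (S : List ℤ) : Prop := OrdDyck S ∧ ∀ j, ¬ Eligible S j

/-- `di x` is the number of pairs `i < j` with `x i = x j + 1`. -/
def di (x : List ℤ) : ℕ :=
  ((Finset.range x.length ×ˢ Finset.range x.length).filter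
    (fun p => p.1 < p.2 ∧ x.getD p.1 0 = x.getD p.2 0 + 1)).card

/-- `nv x` is the number of pairs `i < j` with `x i = x j`. -/
def nv (x : List ℤ) : ℕ :=
  ((Finset.range x.length ×ˢ Finset.range x.length).filter
    (fun p => p.1 < p.2 ∧ x.getD p.1 0 = x.getD p.2 0)).card

/-- `dinv x = di x + nv x`. -/
def dinv (x : List ℤ) : ℕ := di x + nv x

/-- `area x` is the sum of the entries of `x`. -/
def area (x : List ℤ) : ℤ := x.sum

/-- `defc T = C(n,2) − area T − dinv T` for a length-`n` word, as an integer. -/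
def defc (T : List ℤ) : ℤ := (T.length.choose 2 : ℤ) - area T - dinv T

open Finset

lemma affine_step {S : List ℤ} (h : AffineDyck S) {i : ℕ} (hi : i + 1 < S.length) :
    S.getD (i+1) 0 ≤ S.getD i 0 + 1 := by
  have h2 := List.isChain_iff_getElem.mp h i hi
  rw [List.getD_eq_getElem (hn := hi), List.getD_eq_getElem (hn := (by omega : i < S.length))]
  exact h2

lemma f_nonneg {S : List ℤ} (hS : OrdDyck S) (i : ℕ) : 0 ≤ S.getD i 0 := by
  by_cases h : i < S.length
  · rw [List.getD_eq_getElem (hn := h)]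
    exact hS.2.2.2 _ (List.getElem_mem h)
  · rw [List.getD_eq_default _ _ (by omega)]

lemma ivt {S : List ℤ} (hS : OrdDyck S) :
    ∀ j, j < S.length → ∀ v : ℤ, 0 ≤ v → v < S.getD j 0 → ∃ i, i < j ∧ S.getD i 0 = v := by
  intro j
  induction j with
  | zero => intro _ v hv hlt; rw [hS.2.2.1] at hlt; omega
  | succ j ih =>
    intro hj v hv hlt
    by_cases h : v < S.getD j 0
    · obtain ⟨i, hi, he⟩ := ih (by omega) v hv h
      exact ⟨i, by omega, he⟩
    · have hc := affine_step hS.2.1 hj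
      exact ⟨j, by omega, by omega⟩

lemma skeleton_two {S : List ℤ} (hS : FullSkeleton S) :
    ∀ j, j < S.length → ∀ v : ℤ, 1 ≤ v → v ≤ S.getD j 0 →
      2 ≤ ((range j).filter (fun i => S.getD i 0 = v - 1)).card := by
  intro j hj v hv hvj
  have hex : ∃ i, v ≤ S.getD i 0 := ⟨j, hvj⟩
  set j0 := Nat.find hex with hj0def
  have hj0le : j0 ≤ j := Nat.find_min' hex hvj
  have hj0 : v ≤ S.getD j0 0 := Nat.find_spec hex
  have hmin : ∀ i, i < j0 → S.getD i 0 < v := by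
    intro i hi
    have := Nat.find_min hex hi
    omega
  have hj0n : j0 < S.length := by omega
  have hfj0 : S.getD j0 0 = v := by
    rcases Nat.eq_zero_or_pos j0 with h0 | h0
    · rw [h0] at hj0 ⊢
      rw [hS.1.2.2.1] at hj0 ⊢
      omega
    · obtain ⟨k, hk⟩ : ∃ k, j0 = k + 1 := ⟨j0 - 1, by omega⟩
      have h1 := hmin k (by omega)
      have h2 := affine_step hS.1.2.1 (show k + 1 < S.length by omega)
      rw [hk] at hj0 ⊢
      omega
  -- it suffices to bound the count over range j0
  have hsub : (range j0).filter (fun i => S.getD i 0 = v - 1) ⊆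
      (range j).filter (fun i => S.getD i 0 = v - 1) :=
    filter_subset_filter _ (range_subset_range.mpr hj0le)
  refine le_trans ?_ (card_le_card hsub)
  by_contra hlt
  push_neg at hlt
  obtain ⟨i0, hi0, he0⟩ := ivt hS.1 j0 hj0n (v - 1) (by omega) (by omega)
  have hpos : 0 < ((range j0).filter (fun i => S.getD i 0 = v - 1)).card :=
    card_pos.mpr ⟨i0, mem_filter.mpr ⟨mem_range.mpr hi0, he0⟩⟩
  have hcard : ((range j0).filter (fun i => S.getD i 0 = v - 1)).card = 1 := by omega
  have Q : ∀ t, j0 + t < S.length →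
      S.getD (j0+t) 0 = v + t ∧ (∀ i, i < j0 + t → S.getD i 0 < v + t) ∧
      ((range (j0+t)).filter (fun i => S.getD i 0 = S.getD (j0+t) 0 - 1)).card = 1 := by
    intro t
    induction t with
    | zero =>
      intro _
      refine ⟨by simpa using hfj0, by simpa using hmin, ?_⟩
      simp only [Nat.add_zero, hfj0]
      exact hcard
    | succ t ih =>
      intro hlen
      obtain ⟨hq1, hq2, hq3⟩ := ih (by omega)
      have hne := hS.2 (j0 + t)
      rw [Eligible] at hne
      push_neg at hne
      have h3 := hne (by omega) hq3
      have hup : S.getD (j0 + t) 0 < S.getD (j0 + t + 1) 0 := h3.2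
      have hstep : S.getD (j0 + t + 1) 0 ≤ S.getD (j0 + t) 0 + 1 :=
        affine_step hS.1.2.1 (by omega)
      have hval : S.getD (j0 + (t+1)) 0 = v + (t+1) := by
        push_cast
        have : j0 + (t+1) = j0 + t + 1 := by omega
        rw [this]
        omega
      refine ⟨hval, ?_, ?_⟩
      · intro i hi
        push_cast
        rcases Nat.lt_or_ge i (j0 + t) with h | h
        · have := hq2 i h; push_cast at this ⊢; omega
        · have : i = j0 + t := by omega
          rw [this, hq1]; push_cast; omega
      · have hset : (range (j0+(t+1))).filter (fun i => S.getD i 0 = S.getD (j0+(t+1)) 0 - 1)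
            = {j0 + t} := by
          ext i
          simp only [mem_filter, mem_range, mem_singleton, hval]
          constructor
          · rintro ⟨h1, h2⟩
            by_contra hne2
            have hi : i < j0 + t := by omega
            have := hq2 i hi
            push_cast at h2 this
            omega
          · rintro rfl
            refine ⟨by omega, ?_⟩
            rw [hq1]; push_cast; ring
        rw [hset, card_singleton]
  have hn1 : j0 + (S.length - 1 - j0) = S.length - 1 := by omega
  obtain ⟨hq1, hq2, hq3⟩ := Q (S.length - 1 - j0) (by omega)
  rw [hn1] at hq3
  exact hS.2 (S.length - 1) ⟨by omega, hq3, Or.inl (by omega)⟩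

lemma two_area_le {S : List ℤ} (hS : FullSkeleton S) {j : ℕ} (hj : j < S.length) :
    2 * S.getD j 0 ≤ (((range j).filter (fun i => S.getD i 0 < S.getD j 0)).card : ℤ) := by
  set m := (S.getD j 0).toNat with hm
  have hfj : (m : ℤ) = S.getD j 0 := Int.toNat_of_nonneg (f_nonneg hS.1 j)
  have hdisj : ∀ v ∈ range m, ∀ w ∈ range m, v ≠ w →
      Disjoint ((range j).filter (fun i => S.getD i 0 = (v:ℤ)))
        ((range j).filter (fun i => S.getD i 0 = (w:ℤ))) := by
    intro v _ w _ hvw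
    rw [Finset.disjoint_left]
    intro a ha hb
    have h1 := (mem_filter.mp ha).2
    have h2 := (mem_filter.mp hb).2
    omega
  have hsub : (range m).biUnion (fun v => (range j).filter (fun i => S.getD i 0 = (v:ℤ)))
      ⊆ (range j).filter (fun i => S.getD i 0 < S.getD j 0) := by
    intro i hi
    simp only [mem_biUnion, mem_filter, mem_range] at hi ⊢
    obtain ⟨v, hv, hiv, hival⟩ := hi
    refine ⟨hiv, ?_⟩
    rw [hival, ← hfj]
    exact_mod_cast hv
  have hcards : ∀ v ∈ range m,
      2 ≤ ((range j).filter (fun i => S.getD i 0 = (v:ℤ))).card := by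
    intro v hv
    have hvm : (v:ℤ) + 1 ≤ S.getD j 0 := by
      rw [← hfj]; exact_mod_cast mem_range.mp hv
    have := skeleton_two hS j hj ((v:ℤ) + 1) (by omega) hvm
    simpa using this
  have h1 : 2 * m ≤ ((range m).biUnion
      (fun v => (range j).filter (fun i => S.getD i 0 = (v:ℤ)))).card := by
    rw [card_biUnion hdisj]
    calc 2 * m = ∑ _v ∈ range m, 2 := by simp [mul_comm]
    _ ≤ _ := Finset.sum_le_sum hcards
  have h2 := card_le_card hsub
  have : 2 * m ≤ ((range j).filter (fun i => S.getD i 0 < S.getD j 0)).card := by omega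
  calc 2 * S.getD j 0 = 2 * (m : ℤ) := by rw [hfj]
  _ ≤ _ := by exact_mod_cast this

lemma card_pairs (n : ℕ) (q : ℕ → ℕ → Prop) [∀ i j, Decidable (q i j)] :
    ((range n ×ˢ range n).filter (fun p => p.1 < p.2 ∧ q p.1 p.2)).card
      = ∑ j ∈ range n, ((range j).filter (fun i => q i j)).card := by
  rw [Finset.card_filter, Finset.sum_product_right]
  refine Finset.sum_congr rfl fun j hj => ?_
  rw [← Finset.card_filter]
  congr 1
  ext i
  simp only [mem_filter, mem_range]
  have := mem_range.mp hj
  constructor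
  · rintro ⟨_, h1, h2⟩; exact ⟨h1, h2⟩
  · rintro ⟨h1, h2⟩; exact ⟨by omega, h1, h2⟩

lemma sum_getD (S : List ℤ) : S.sum = ∑ i ∈ range S.length, S.getD i 0 := by
  induction S with
  | nil => simp
  | cons a l ih =>
    rw [List.sum_cons, List.length_cons, Finset.sum_range_succ']
    simp only [List.getD_cons_succ, List.getD_cons_zero]
    rw [← ih]; ring


/-- **Area bound for full skeletons.**  If `S` is a full Dyck skeleton, then
`area(S) ≤ defc(S)`. -/
theorem area_le_defc (S : List ℤ) (hS : FullSkeleton S) :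
    area S ≤ defc S := by
  set n := S.length with hn
  have hdi : di S = ∑ j ∈ range n, ((range j).filter
      (fun i => S.getD i 0 = S.getD j 0 + 1)).card :=
    card_pairs n (fun i j => S.getD i 0 = S.getD j 0 + 1)
  have hnv : nv S = ∑ j ∈ range n, ((range j).filter
      (fun i => S.getD i 0 = S.getD j 0)).card :=
    card_pairs n (fun i j => S.getD i 0 = S.getD j 0)
  set L := ∑ j ∈ range n, ((range j).filter (fun i => S.getD i 0 < S.getD j 0)).card with hL
  have hper : ∀ j ∈ range n,
      ((range j).filter (fun i => S.getD i 0 = S.getD j 0 + 1)).card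
      + ((range j).filter (fun i => S.getD i 0 = S.getD j 0)).card
      + ((range j).filter (fun i => S.getD i 0 < S.getD j 0)).card ≤ j := by
    intro j _
    set A := (range j).filter (fun i => S.getD i 0 = S.getD j 0 + 1) with hA
    set B := (range j).filter (fun i => S.getD i 0 = S.getD j 0) with hB
    set C := (range j).filter (fun i => S.getD i 0 < S.getD j 0) with hC
    have dAB : Disjoint A B := by
      rw [Finset.disjoint_left]; intro a ha hb
      have h1 := (mem_filter.mp ha).2; have h2 := (mem_filter.mp hb).2; omega
    have dABC : Disjoint (A ∪ B) C := by
      rw [Finset.disjoint_left]; intro a ha hc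
      have h3 := (mem_filter.mp hc).2
      rcases Finset.mem_union.mp ha with h | h
      · have := (mem_filter.mp h).2; omega
      · have := (mem_filter.mp h).2; omega
    calc A.card + B.card + C.card = (A ∪ B).card + C.card := by
          rw [card_union_of_disjoint dAB]
    _ = ((A ∪ B) ∪ C).card := (card_union_of_disjoint dABC).symm
    _ ≤ (range j).card := card_le_card (by
          intro a ha
          rcases Finset.mem_union.mp ha with h | h
          · rcases Finset.mem_union.mp h with h | h
            · exact mem_of_mem_filter _ h
            · exact mem_of_mem_filter _ h
          · exact mem_of_mem_filter _ h)
    _ = j := card_range j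
  have htot : di S + nv S + L ≤ n.choose 2 := by
    rw [hdi, hnv, hL, ← Finset.sum_add_distrib, ← Finset.sum_add_distrib]
    have h1 : ∑ j ∈ range n, (((range j).filter (fun i => S.getD i 0 = S.getD j 0 + 1)).card
        + ((range j).filter (fun i => S.getD i 0 = S.getD j 0)).card
        + ((range j).filter (fun i => S.getD i 0 < S.getD j 0)).card) ≤ ∑ j ∈ range n, j :=
      Finset.sum_le_sum hper
    have h2 : (∑ j ∈ range n, j) * 2 = n * (n-1) := Finset.sum_range_id_mul_two n
    have h3 : n.choose 2 = n * (n-1) / 2 := Nat.choose_two_right n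
    have h4 : n * (n-1) = (∑ j ∈ range n, j) * 2 := h2.symm
    omega
  have harea : 2 * area S ≤ (L : ℤ) := by
    rw [area, sum_getD, hL]
    push_cast
    rw [Finset.mul_sum]
    exact Finset.sum_le_sum fun j hj => two_area_le hS (mem_range.mp hj)
  rw [defc, dinv, ← hn]
  have hc : (di S : ℤ) + nv S + L ≤ (n.choose 2 : ℤ) := by exact_mod_cast htot
  push_cast
  omega
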